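/- In the regularized square-root LASSO problem min_x ||A x - b||_2 + Σ_i λ_i|x_i| with A = [Φ; σI], b = [y; 0], deleting from the problem all columns i with ||φ_i||_2² + σ² < λ_i² (i.e. restricting x to be zero on those coordinates) does not change the optimal value. -/

import Mathlib

noncomputable def rsqrtObj {m n : ℕ} (Φ : Matrix (Fin m) (Fin n) ℝ)
    (y : Fin m → ℝ) (σ : ℝ) (lam : Fin n → ℝ) (x : Fin n → ℝ) : ℝ :=
  Real.sqrt ((∑ k, (Φ.mulVec x - y) k ^ 2) + ∑ j, (σ * x j) ^ 2)
    + ∑ i, lam i * |x i|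

section aux
variable {m n : ℕ} (Φ : Matrix (Fin m) (Fin n) ℝ) (y : Fin m → ℝ) (σ : ℝ)

noncomputable def colv (i : Fin n) : EuclideanSpace ℝ (Fin m ⊕ Fin n) :=
  WithLp.toLp 2 (Sum.elim (fun k => Φ k i) (fun j => if j = i then σ else 0))

noncomputable def Vv (x : Fin n → ℝ) : EuclideanSpace ℝ (Fin m ⊕ Fin n) :=
  WithLp.toLp 2 (Sum.elim (Φ.mulVec x - y) (fun j => σ * x j))

noncomputable def cvec : EuclideanSpace ℝ (Fin m ⊕ Fin n) :=
  WithLp.toLp 2 (Sum.elim y (0 : Fin n → ℝ))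

lemma Vv_eq (x : Fin n → ℝ) :
    Vv Φ y σ x = (∑ i, x i • colv Φ σ i) - cvec y (n := n) := by
  ext p
  have hs : (∑ i, x i • colv Φ σ i) p = ∑ i, x i * colv Φ σ i p := by
    rw [WithLp.ofLp_sum, Finset.sum_apply]; rfl
  have hsub : ((∑ i, x i • colv Φ σ i) - cvec y (n := n)) p
      = (∑ i, x i • colv Φ σ i) p - cvec y (n := n) p := rfl
  rw [hsub, hs]
  cases p with
  | inl k =>
    simp [Vv, colv, cvec, Matrix.mulVec, dotProduct, mul_comm]
  | inr j =>
    simp [Vv, colv, cvec, Finset.sum_ite_eq, mul_comm]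

lemma norm_Vv (x : Fin n → ℝ) :
    ‖Vv Φ y σ x‖ =
      Real.sqrt ((∑ k, (Φ.mulVec x - y) k ^ 2) + ∑ j, (σ * x j) ^ 2) := by
  rw [EuclideanSpace.norm_eq, Fintype.sum_sum_type]
  simp only [Vv, WithLp.ofLp_toLp, Sum.elim_inl, Sum.elim_inr, Real.norm_eq_abs, sq_abs]

lemma norm_colv (i : Fin n) :
    ‖colv Φ σ i‖ = Real.sqrt ((∑ k, (Φ k i) ^ 2) + σ ^ 2) := by
  rw [EuclideanSpace.norm_eq, Fintype.sum_sum_type]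
  simp [colv, Real.norm_eq_abs, sq_abs, Finset.sum_ite_eq, apply_ite (· ^ 2)]

end aux

lemma key_ineq {m n : ℕ} (Φ : Matrix (Fin m) (Fin n) ℝ)
    (y : Fin m → ℝ) (σ : ℝ) (lam : Fin n → ℝ) (hlam : ∀ i, 0 ≤ lam i)
    (x : Fin n → ℝ) :
    rsqrtObj Φ y σ lam
      (fun i => if (∑ k, (Φ k i) ^ 2) + σ ^ 2 < (lam i) ^ 2 then 0 else x i)
      ≤ rsqrtObj Φ y σ lam x := by
  classical
  set P : Fin n → Prop := fun i => (∑ k, (Φ k i) ^ 2) + σ ^ 2 < (lam i) ^ 2 with hP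
  set x' : Fin n → ℝ := fun i => if P i then 0 else x i with hx'
  set S : Finset (Fin n) := Finset.univ.filter P with hS
  -- norm of bad columns is ≤ lam
  have hcol : ∀ i ∈ S, ‖colv Φ σ i‖ ≤ lam i := by
    intro i hi
    rw [hS, Finset.mem_filter] at hi
    have h2 : (∑ k, (Φ k i) ^ 2) + σ ^ 2 ≤ (lam i) ^ 2 := le_of_lt hi.2
    calc ‖colv Φ σ i‖ = Real.sqrt ((∑ k, (Φ k i) ^ 2) + σ ^ 2) := norm_colv Φ σ i
      _ ≤ Real.sqrt ((lam i) ^ 2) := Real.sqrt_le_sqrt h2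
      _ = lam i := Real.sqrt_sq (hlam i)
  -- V x' = V x - ∑_{i ∈ S} x i • colv i
  have hVx' : Vv Φ y σ x' = Vv Φ y σ x - ∑ i ∈ S, x i • colv Φ σ i := by
    rw [Vv_eq, Vv_eq]
    have : (∑ i, x' i • colv Φ σ i)
        = (∑ i, x i • colv Φ σ i) - ∑ i ∈ S, x i • colv Φ σ i := by
      rw [eq_sub_iff_add_eq, ← Finset.sum_filter_add_sum_filter_not Finset.univ P
        (fun i => x i • colv Φ σ i)]
      have h1 : (∑ i, x' i • colv Φ σ i)
          = ∑ i ∈ Finset.univ.filter (fun i => ¬ P i), x i • colv Φ σ i := by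
        rw [Finset.sum_filter]
        apply Finset.sum_congr rfl
        intro i _
        by_cases h : P i <;> simp [hx', h]
      rw [h1]; exact add_comm _ _
    rw [this]; abel
  have hnormx' : ‖Vv Φ y σ x'‖ ≤ ‖Vv Φ y σ x‖ + ∑ i ∈ S, lam i * |x i| := by
    rw [hVx']
    calc ‖Vv Φ y σ x - ∑ i ∈ S, x i • colv Φ σ i‖
        ≤ ‖Vv Φ y σ x‖ + ‖∑ i ∈ S, x i • colv Φ σ i‖ := norm_sub_le _ _
      _ ≤ ‖Vv Φ y σ x‖ + ∑ i ∈ S, lam i * |x i| := by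
          gcongr
          calc ‖∑ i ∈ S, x i • colv Φ σ i‖ ≤ ∑ i ∈ S, ‖x i • colv Φ σ i‖ :=
                norm_sum_le _ _
            _ ≤ ∑ i ∈ S, lam i * |x i| := by
                apply Finset.sum_le_sum
                intro i hi
                rw [norm_smul, Real.norm_eq_abs, mul_comm]
                exact mul_le_mul_of_nonneg_right (hcol i hi) (abs_nonneg _)
  -- penalty
  have hpen : (∑ i, lam i * |x' i|) + ∑ i ∈ S, lam i * |x i|
      = ∑ i, lam i * |x i| := by
    have h1 : (∑ i, lam i * |x' i|)
        = ∑ i ∈ Finset.univ.filter (fun i => ¬ P i), lam i * |x i| := by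
      rw [Finset.sum_filter]
      apply Finset.sum_congr rfl
      intro i _
      by_cases h : P i <;> simp [hx', h]
    rw [h1, hS, add_comm, Finset.sum_filter_add_sum_filter_not]
  have hobj : ∀ z, rsqrtObj Φ y σ lam z = ‖Vv Φ y σ z‖ + ∑ i, lam i * |z i| := by
    intro z; rw [norm_Vv]; rfl
  show rsqrtObj Φ y σ lam x' ≤ rsqrtObj Φ y σ lam x
  rw [hobj, hobj]
  linarith [hnormx']

theorem feature_elimination_preserves_value {m n : ℕ}
    (Φ : Matrix (Fin m) (Fin n) ℝ) (y : Fin m → ℝ) (σ : ℝ) (hσ : 0 ≤ σ)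
    (lam : Fin n → ℝ) (hlam : ∀ i, 0 ≤ lam i) :
    sInf {v : ℝ | ∃ x : Fin n → ℝ, v = rsqrtObj Φ y σ lam x}
      = sInf {v : ℝ | ∃ x : Fin n → ℝ,
          (∀ i, (∑ k, (Φ k i) ^ 2) + σ ^ 2 < (lam i) ^ 2 → x i = 0) ∧
          v = rsqrtObj Φ y σ lam x} := by
  classical
  set A := {v : ℝ | ∃ x : Fin n → ℝ, v = rsqrtObj Φ y σ lam x} with hA
  set B := {v : ℝ | ∃ x : Fin n → ℝ,
      (∀ i, (∑ k, (Φ k i) ^ 2) + σ ^ 2 < (lam i) ^ 2 → x i = 0) ∧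
      v = rsqrtObj Φ y σ lam x} with hB
  have hBA : B ⊆ A := by rintro v ⟨x, _, hv⟩; exact ⟨x, hv⟩
  have hnonneg : ∀ x, 0 ≤ rsqrtObj Φ y σ lam x := by
    intro x
    apply add_nonneg (Real.sqrt_nonneg _)
    exact Finset.sum_nonneg fun i _ => mul_nonneg (hlam i) (abs_nonneg _)
  have hbddA : BddBelow A := by
    refine ⟨0, ?_⟩; rintro v ⟨x, rfl⟩; exact hnonneg x
  have hbddB : BddBelow B := hbddA.mono hBA
  have hBne : B.Nonempty := ⟨rsqrtObj Φ y σ lam 0, 0, fun i _ => rfl, rfl⟩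
  apply le_antisymm
  · exact csInf_le_csInf hbddA hBne hBA
  · have hAne : A.Nonempty := ⟨rsqrtObj Φ y σ lam 0, 0, rfl⟩
    apply le_csInf hAne
    rintro v ⟨x, rfl⟩
    have hmem : rsqrtObj Φ y σ lam
        (fun i => if (∑ k, (Φ k i) ^ 2) + σ ^ 2 < (lam i) ^ 2 then 0 else x i) ∈ B := by
      refine ⟨_, fun i hi => ?_, rfl⟩
      simp [hi]
    exact le_trans (csInf_le hbddB hmem) (key_ineq Φ y σ lam hlam x)
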